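/- Let H = -Δ + V on ℓ²(Z^d) with V bounded, and Γ ⊊ Z^d. Then E_Γ(H) - E_∅(H) ≤ 2d + spr(V), where spr(V) = sup V - inf V. -/

import Mathlib

open scoped BigOperators

noncomputable section

/-- `ℤ^d`. -/
abbrev Zd (d : ℕ) := Fin d → ℤ

/-- `ℓ¹` distance on `ℤ^d`. -/
def dist1 {d : ℕ} (x y : Zd d) : ℕ := ∑ i, (x i - y i).natAbs

/-- the `i`-th coordinate unit vector. -/
def unitVec {d : ℕ} (i : Fin d) : Zd d := fun j => if j = i then 1 else 0

/-- the negative discrete Laplacian: `(-Δφ)(x) = Σ_{‖x-y‖₁=1} (φ(x) - φ(y))`. -/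
def negLap {d : ℕ} (φ : Zd d → ℝ) (x : Zd d) : ℝ :=
  ∑ i, ((φ x - φ (x + unitVec i)) + (φ x - φ (x - unitVec i)))

/-- characteristic function of a set. -/
def chi {d : ℕ} (A : Set (Zd d)) : Zd d → ℝ := A.indicator fun _ => 1

/-- edge boundary `∂A = {(x,y) ∈ A × Aᶜ : ‖x-y‖₁ = 1}`. -/
def bdry {d : ℕ} (A : Set (Zd d)) : Set (Zd d × Zd d) :=
  {p | p.1 ∈ A ∧ p.2 ∉ A ∧ dist1 p.1 p.2 = 1}

/-- squared `ℓ²` norm (for finitely supported functions). -/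
def norm2 {d : ℕ} (φ : Zd d → ℝ) : ℝ := ∑ᶠ x, φ x ^ 2

/-- quadratic form `⟨φ, (-Δ + V)φ⟩` (for finitely supported `φ`). -/
def energy {d : ℕ} (V : Zd d → ℝ) (φ : Zd d → ℝ) : ℝ :=
  ∑ᶠ x, φ x * (negLap φ x + V x * φ x)

/-- `V` is a bounded potential. -/
def BddPot {d : ℕ} (V : Zd d → ℝ) : Prop := ∃ C, ∀ x, |V x| ≤ C

/-- the spread `spr(V) = sup V - inf V` of a bounded potential. -/
def spr {d : ℕ} (V : Zd d → ℝ) : ℝ := sSup (Set.range V) - sInf (Set.range V)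

/-- `E_∅(H) = inf σ(-Δ + V)`, characterized variationally over normalized finitely
supported functions. -/
def E0 {d : ℕ} (V : Zd d → ℝ) : ℝ :=
  sInf {r | ∃ φ : Zd d → ℝ, (Function.support φ).Finite ∧ norm2 φ = 1 ∧ r = energy V φ}

/-- `E_Γ(H) = inf σ(H_Γ)`, the ground state energy of the `Γ`-trimmed operator,
characterized variationally over normalized finitely supported functions vanishing on `Γ`. -/
def EG {d : ℕ} (V : Zd d → ℝ) (Γ : Set (Zd d)) : ℝ :=
  sInf {r | ∃ φ : Zd d → ℝ, (Function.support φ).Finite ∧ (∀ x ∈ Γ, φ x = 0) ∧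
    norm2 φ = 1 ∧ r = energy V φ}

/-- `E_Γ(H,t) = inf σ(H + t χ_Γ)`. -/
def EGt {d : ℕ} (V : Zd d → ℝ) (Γ : Set (Zd d)) (t : ℝ) : ℝ :=
  E0 fun x => V x + t * chi Γ x

/-- the open box `Λ⁰_K(ζ) = {y : ‖y-ζ‖_∞ < K/2}`. -/
def Lam0 {d : ℕ} (K : ℕ) (ζ : Zd d) : Set (Zd d) := {y | ∀ i, 2 * (y i - ζ i).natAbs < K}

/-- `Γ` is `(K,Q)`-relatively dense: `|Γ ∩ Λ⁰_K(ζ)| ≥ Q` for all `ζ ∈ KZ^d`. -/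
def RelDense {d : ℕ} (Γ : Set (Zd d)) (K Q : ℕ) : Prop :=
  ∀ z : Zd d, Q ≤ (Γ ∩ Lam0 K fun i => (K : ℤ) * z i).ncard

/-- `K_* = K` if `K` is odd, `K+1` if `K` is even. -/
def Kstar (K : ℕ) : ℕ := if K % 2 = 1 then K else K + 1

/-- `⟨χ_A, (-Δ)χ_A⟩` for a finite set `A`; for `A ⊆ Γᶜ` this coincides with
`⟨χ_A, (-Δ_Γ)χ_A⟩` for the `Γ`-trimmed Laplacian. -/
def qform {d : ℕ} (A : Finset (Zd d)) : ℝ := ∑ x ∈ A, negLap (chi ↑A) x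

/-- Cheeger constant `β(Γ)` of the `Γ`-trimmed Laplacian. -/
def betaG {d : ℕ} (Γ : Set (Zd d)) : ℝ :=
  sInf {r | ∃ A : Finset (Zd d), A.Nonempty ∧ (↑A : Set (Zd d)) ⊆ Γᶜ ∧
    r = qform A / A.card}

/-- `⟨χ_A, H(t)χ_A⟩ = ⟨χ_A, (-Δ)χ_A⟩ + t|A ∩ Γ|` for a finite set `A`. -/
def qformT {d : ℕ} (Γ : Set (Zd d)) (t : ℝ) (A : Finset (Zd d)) : ℝ :=
  qform A + t * ((↑A ∩ Γ : Set (Zd d)).ncard)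

/-- Cheeger constant `β(t)` of `H(t) = -Δ + t χ_Γ`. -/
def betaT {d : ℕ} (Γ : Set (Zd d)) (t : ℝ) : ℝ :=
  sInf {r | ∃ A : Finset (Zd d), A.Nonempty ∧ r = qformT Γ t A / A.card}

/-- the box `Λ_L(x₀) = {y : ‖y-x₀‖_∞ ≤ L/2}`. -/
def box {d : ℕ} (L : ℕ) (x₀ : Zd d) : Set (Zd d) := {y | ∀ i, 2 * (y i - x₀ i).natAbs ≤ L}

/-- `φ` is an eigenfunction of `H_Λ = (-Δ + V)_Λ` with eigenvalue `E`. -/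
def eigOn {d : ℕ} (V : Zd d → ℝ) (Λ : Set (Zd d)) (φ : Zd d → ℝ) (E : ℝ) : Prop :=
  (∀ x ∉ Λ, φ x = 0) ∧ ∀ x ∈ Λ, negLap φ x + V x * φ x = E * φ x

/-- `E^Λ = inf σ(H_Λ)`, variationally. -/
def Ebox {d : ℕ} (V : Zd d → ℝ) (Λ : Set (Zd d)) : ℝ :=
  sInf {r | ∃ φ : Zd d → ℝ, (∀ x ∉ Λ, φ x = 0) ∧ norm2 φ = 1 ∧ r = energy V φ}

section Stmt6Aux

open Function

variable {d : ℕ}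

lemma supp_mul_left (φ g : Zd d → ℝ) :
    (support fun x => φ x * g x) ⊆ support φ := by
  intro x hx
  simp only [mem_support] at hx ⊢
  intro h; apply hx; rw [h]; ring

lemma shift_finsum (g : Zd d → ℝ) (v : Zd d) : ∑ᶠ x, g (x + v) = ∑ᶠ x, g x :=
  finsum_comp (fun x => x + v) (Equiv.addRight v).bijective

lemma supp_shift_finite {φ : Zd d → ℝ} (hφ : (support φ).Finite) (v : Zd d) :
    (support fun x => φ (x + v)).Finite := by
  have : (support fun x => φ (x + v)) = (fun x => x + v) ⁻¹' (support φ) := rfl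
  rw [this]
  exact Set.Finite.preimage ((Equiv.addRight v).injective.injOn) hφ

lemma dir_nonneg (φ : Zd d → ℝ) (hφ : (support φ).Finite) (v : Zd d) :
    0 ≤ ∑ᶠ x, (φ x * (φ x - φ (x + v)) + φ x * (φ x - φ (x - v))) := by
  set A : Zd d → ℝ := fun x => φ x * (φ x - φ (x + v)) with hAdef
  set B : Zd d → ℝ := fun x => φ x * (φ x - φ (x - v)) with hBdef
  set C : Zd d → ℝ := fun x => φ (x + v) * (φ (x + v) - φ x) with hCdef
  have hA : (support A).Finite := hφ.subset (supp_mul_left _ _)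
  have hB : (support B).Finite := hφ.subset (supp_mul_left _ _)
  have hC : (support C).Finite := by
    have h1 : (support fun x => φ (x + v)).Finite := supp_shift_finite hφ v
    exact h1.subset (supp_mul_left _ _)
  have hBC : ∑ᶠ x, B x = ∑ᶠ x, C x := by
    rw [← shift_finsum B v]
    apply finsum_congr
    intro x
    simp only [hBdef, hCdef, add_sub_cancel_right]
  have key : ∑ᶠ x, (A x + B x) = ∑ᶠ x, (φ x - φ (x + v)) ^ 2 := by
    rw [finsum_add_distrib hA hB, hBC, ← finsum_add_distrib hA hC]
    apply finsum_congr
    intro x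
    simp only [hAdef, hCdef]
    ring
  rw [key]
  exact finsum_nonneg fun x => sq_nonneg _

lemma lapform_nonneg (φ : Zd d → ℝ) (hφ : (support φ).Finite) :
    0 ≤ ∑ᶠ x, φ x * negLap φ x := by
  have hcong : ∀ x, φ x * negLap φ x = ∑ i : Fin d,
      (φ x * (φ x - φ (x + unitVec i)) + φ x * (φ x - φ (x - unitVec i))) := by
    intro x
    rw [negLap, Finset.mul_sum]
    exact Finset.sum_congr rfl fun i _ => by ring
  rw [finsum_congr hcong, finsum_sum_comm]
  · exact Finset.sum_nonneg fun i _ => dir_nonneg φ hφ _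
  · intro i _
    refine hφ.subset ?_
    intro x hx
    simp only [mem_support] at hx ⊢
    intro h; apply hx; rw [h]; ring

lemma energy_split (V φ : Zd d → ℝ) (hφ : (support φ).Finite) :
    energy V φ = (∑ᶠ x, φ x * negLap φ x) + ∑ᶠ x, V x * φ x ^ 2 := by
  have h1 : (support fun x => φ x * negLap φ x).Finite := hφ.subset (supp_mul_left _ _)
  have h2 : (support fun x => V x * φ x ^ 2).Finite := by
    refine hφ.subset ?_
    intro x hx
    simp only [mem_support] at hx ⊢
    intro h; apply hx; rw [h]; ring
  rw [energy, ← finsum_add_distrib h1 h2]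
  apply finsum_congr
  intro x; ring

lemma energy_ge (V : Zd d → ℝ) (hV : BddPot V) (φ : Zd d → ℝ)
    (hφ : (support φ).Finite) (hn : norm2 φ = 1) :
    sInf (Set.range V) ≤ energy V φ := by
  obtain ⟨Cb, hC⟩ := hV
  have hbdd : BddBelow (Set.range V) := by
    refine ⟨-Cb, ?_⟩
    rintro r ⟨x, rfl⟩
    linarith [abs_le.1 (hC x)]
  set m := sInf (Set.range V) with hm
  have hmle : ∀ x, m ≤ V x := fun x => csInf_le hbdd ⟨x, rfl⟩
  have hsq : (support fun x => φ x ^ 2).Finite := by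
    refine hφ.subset ?_
    intro x hx
    simp only [mem_support] at hx ⊢
    intro h; apply hx; rw [h]; ring
  have hVsq : (support fun x => V x * φ x ^ 2).Finite := by
    refine hφ.subset ?_
    intro x hx
    simp only [mem_support] at hx ⊢
    intro h; apply hx; rw [h]; ring
  have hmsq : (support fun x => m * φ x ^ 2).Finite := by
    refine hφ.subset ?_
    intro x hx
    simp only [mem_support] at hx ⊢
    intro h; apply hx; rw [h]; ring
  have step : m ≤ ∑ᶠ x, V x * φ x ^ 2 := by
    have h0 : 0 ≤ ∑ᶠ x, (V x * φ x ^ 2 - m * φ x ^ 2) :=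
      finsum_nonneg fun x => by nlinarith [hmle x, sq_nonneg (φ x)]
    have hsub : ∑ᶠ x, (V x * φ x ^ 2 - m * φ x ^ 2)
        = (∑ᶠ x, V x * φ x ^ 2) - ∑ᶠ x, m * φ x ^ 2 :=
      finsum_sub_distrib hVsq hmsq
    have hmul : ∑ᶠ x, m * φ x ^ 2 = m := by
      rw [← mul_finsum _ m]
      rw [norm2] at hn
      rw [hn, mul_one]
    rw [hsub, hmul] at h0
    linarith
  rw [energy_split V φ hφ]
  linarith [lapform_nonneg φ hφ]

def deltaFn {d : ℕ} (x₀ : Zd d) : Zd d → ℝ := fun x => if x = x₀ then 1 else 0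

lemma delta_supp (x₀ : Zd d) : (support (deltaFn x₀)).Finite := by
  apply Set.Finite.subset (Set.finite_singleton x₀)
  intro x hx
  simp only [mem_support, deltaFn] at hx
  by_contra h
  simp only [Set.mem_singleton_iff] at h
  simp [h] at hx

lemma delta_norm2 (x₀ : Zd d) : norm2 (deltaFn x₀) = 1 := by
  rw [norm2, finsum_eq_single _ x₀ (fun x hx => by simp [deltaFn, hx])]
  simp [deltaFn]

lemma delta_ne (x₀ : Zd d) (i : Fin d) :
    x₀ + unitVec i ≠ x₀ ∧ x₀ - unitVec i ≠ x₀ := by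
  constructor
  · intro h
    have := congrFun h i
    simp only [Pi.add_apply, unitVec, if_true] at this
    omega
  · intro h
    have := congrFun h i
    simp only [Pi.sub_apply, unitVec, if_true] at this
    omega

lemma delta_energy (V : Zd d → ℝ) (x₀ : Zd d) :
    energy V (deltaFn x₀) = 2 * d + V x₀ := by
  have hlap : negLap (deltaFn x₀) x₀ = 2 * d := by
    rw [negLap]
    have : ∀ i : Fin d, ((deltaFn x₀ x₀ - deltaFn x₀ (x₀ + unitVec i)) +
        (deltaFn x₀ x₀ - deltaFn x₀ (x₀ - unitVec i))) = 2 := by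
      intro i
      obtain ⟨h1, h2⟩ := delta_ne x₀ i
      simp [deltaFn, h1, h2]; norm_num
    rw [Finset.sum_congr rfl fun i _ => this i]
    simp [mul_comm]
  rw [energy, finsum_eq_single _ x₀ (fun x hx => by simp [deltaFn, hx])]
  simp [deltaFn, hlap]

end Stmt6Aux

/-- `E_Γ(H) - E_∅(H) ≤ 2d + spr(V)`. -/
theorem stmt6 (d : ℕ) (hd : 0 < d) (V : Zd d → ℝ) (hV : BddPot V)
    (Γ : Set (Zd d)) (hne : Γ ≠ Set.univ) :
    EG V Γ - E0 V ≤ 2 * d + spr V := by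
  obtain ⟨Cb, hC⟩ := hV
  have hbddBelow : BddBelow (Set.range V) := by
    refine ⟨-Cb, ?_⟩; rintro r ⟨x, rfl⟩; linarith [abs_le.1 (hC x)]
  have hbddAbove : BddAbove (Set.range V) := by
    refine ⟨Cb, ?_⟩; rintro r ⟨x, rfl⟩; linarith [abs_le.1 (hC x)]
  obtain ⟨x₀, hx₀⟩ := Set.ne_univ_iff_exists_notMem Γ |>.mp hne
  set m := sInf (Set.range V) with hm
  -- EG bound
  have hEGle : EG V Γ ≤ 2 * d + V x₀ := by
    apply csInf_le
    · refine ⟨m, ?_⟩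
      rintro r ⟨φ, hφ, -, hn, rfl⟩
      exact energy_ge V ⟨Cb, hC⟩ φ hφ hn
    · refine ⟨deltaFn x₀, delta_supp x₀, ?_, delta_norm2 x₀, (delta_energy V x₀).symm⟩
      intro x hx
      have : x ≠ x₀ := fun h => hx₀ (h ▸ hx)
      simp [deltaFn, this]
  -- E0 lower bound
  have hE0ge : m ≤ E0 V := by
    apply le_csInf
    · exact ⟨2 * d + V x₀, deltaFn x₀, delta_supp x₀, delta_norm2 x₀,
        (delta_energy V x₀).symm⟩
    · rintro r ⟨φ, hφ, hn, rfl⟩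
      exact energy_ge V ⟨Cb, hC⟩ φ hφ hn
  have hsup : V x₀ ≤ sSup (Set.range V) := le_csSup hbddAbove ⟨x₀, rfl⟩
  rw [spr]
  have : EG V Γ - E0 V ≤ (2 * d + V x₀) - m := by linarith
  linarith
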